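/- Let E be a graph with |G(E)| > 2. Then G(E) is congruence-free if and only if E has exactly one strongly connected component and every vertex of E has out-degree at least 2. -/

import Mathlib

universe u

/-- A directed graph: vertices, edges, source and range maps. -/
structure DGraph : Type (u + 1) where
  V : Type u
  Ed : Type u
  src : Ed → V
  rng : Ed → V

/-- The end vertex of a list of edges started at `v` (ignoring composability). -/
def DGraph.ranAux (G : DGraph) : G.V → List G.Ed → G.V
  | v, [] => v
  | _, e :: es => DGraph.ranAux G (G.rng e) es

/-- The edges `l` form a composable path starting at `v`. -/
def DGraph.Chain (G : DGraph) : G.V → List G.Ed → Prop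
  | _, [] => True
  | v, e :: es => G.src e = v ∧ DGraph.Chain G (G.rng e) es

theorem DGraph.ranAux_append (G : DGraph) (v : G.V) (l1 l2 : List G.Ed) :
    G.ranAux v (l1 ++ l2) = G.ranAux (G.ranAux v l1) l2 := by
  induction l1 generalizing v with
  | nil => rfl
  | cons e es ih => exact ih (G.rng e)

theorem DGraph.chain_append (G : DGraph) {v : G.V} {l1 l2 : List G.Ed}
    (h1 : G.Chain v l1) (h2 : G.Chain (G.ranAux v l1) l2) : G.Chain v (l1 ++ l2) := by
  induction l1 generalizing v with
  | nil => exact h2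
  | cons e es ih => exact ⟨h1.1, ih h1.2 h2⟩

theorem DGraph.chain_append_right (G : DGraph) {v : G.V} {l1 l2 : List G.Ed}
    (h : G.Chain v (l1 ++ l2)) : G.Chain (G.ranAux v l1) l2 := by
  induction l1 generalizing v with
  | nil => exact h
  | cons e es ih => exact ih h.2

/-- A (finite, directed) path in the graph `G`: a start vertex together
with a composable list of edges. Vertices are the paths of length `0`. -/
structure GPath (G : DGraph.{u}) : Type u where
  start : G.V
  edges : List G.Ed
  chain : G.Chain start edges

namespace GPath

variable {G : DGraph}

/-- The range (end vertex) of a path. -/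
def ran (p : GPath G) : G.V := G.ranAux p.start p.edges

/-- The path of length zero at a vertex. -/
def ofVertex (G : DGraph) (v : G.V) : GPath G := ⟨v, [], trivial⟩

/-- The path of length one given by an edge. -/
def ofEdge (G : DGraph) (e : G.Ed) : GPath G := ⟨G.src e, [e], ⟨rfl, trivial⟩⟩

@[simp] theorem ofVertex_ran (G : DGraph) (v : G.V) : (ofVertex G v).ran = v := rfl

@[simp] theorem ofEdge_ran (G : DGraph) (e : G.Ed) : (ofEdge G e).ran = G.rng e := rfl

/-- Concatenation of composable paths. -/
def append (p q : GPath G) (h : p.ran = q.start) : GPath G :=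
  ⟨p.start, p.edges ++ q.edges,
    G.chain_append p.chain (by
      show G.Chain (G.ranAux p.start p.edges) q.edges
      have : G.ranAux p.start p.edges = q.start := h
      rw [this]; exact q.chain)⟩

@[simp] theorem append_ran (p q : GPath G) (h : p.ran = q.start) :
    (p.append q h).ran = q.ran := by
  show G.ranAux p.start (p.edges ++ q.edges) = q.ran
  rw [G.ranAux_append]
  have : G.ranAux p.start p.edges = q.start := h
  rw [this]; rfl

/-- `y` is an initial segment of the path `p`. -/
def IsPrefixOf (y p : GPath G) : Prop := y.start = p.start ∧ y.edges <+: p.edges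

/-- The remainder `t` of `p` after its initial segment `y`, so that `p = y ++ t`. -/
def remainder (y p : GPath G) (h : y.IsPrefixOf p) : GPath G :=
  ⟨y.ran, p.edges.drop y.edges.length, by
    obtain ⟨l2, hl⟩ := h.2
    rw [← hl, List.drop_left]
    show G.Chain (G.ranAux y.start y.edges) l2
    rw [h.1]
    exact G.chain_append_right (v := p.start) (l1 := y.edges) (l2 := l2)
      (by rw [hl]; exact p.chain)⟩

@[simp] theorem remainder_ran (y p : GPath G) (h : y.IsPrefixOf p) :
    (y.remainder p h).ran = p.ran := by
  obtain ⟨l2, hl⟩ := h.2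
  show G.ranAux y.ran (p.edges.drop y.edges.length) = p.ran
  rw [← hl, List.drop_left]
  show G.ranAux (G.ranAux y.start y.edges) l2 = p.ran
  rw [h.1, ← G.ranAux_append, hl]
  rfl

end GPath

/-- The graph inverse semigroup of `G` (in normal form): its elements are zero together
with the elements `x * y⁻¹` for paths `x`, `y` with the same range. -/
inductive GIS (G : DGraph.{u}) : Type u where
  | zero : GIS G
  | mk (x y : GPath G) (h : x.ran = y.ran) : GIS G

instance (G : DGraph) : Zero (GIS G) := ⟨GIS.zero⟩

open scoped Classical in
/-- Multiplication in the graph inverse semigroup. -/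
noncomputable def GIS.gmul {G : DGraph} : GIS G → GIS G → GIS G
  | GIS.zero, _ => GIS.zero
  | GIS.mk _ _ _, GIS.zero => GIS.zero
  | GIS.mk x y hxy, GIS.mk p q hpq =>
    if h1 : y.IsPrefixOf p then
      GIS.mk (x.append (y.remainder p h1) hxy) q
        (by exact (GPath.append_ran _ _ _).trans ((GPath.remainder_ran _ _ _).trans hpq))
    else if h2 : p.IsPrefixOf y then
      GIS.mk x (q.append (p.remainder y h2) hpq.symm)
        (by exact hxy.trans ((GPath.append_ran _ _ _).trans (GPath.remainder_ran _ _ _)).symm)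
    else GIS.zero

noncomputable instance (G : DGraph) : Mul (GIS G) := ⟨GIS.gmul⟩

/-- The element of `GIS G` corresponding to a vertex `v` (i.e. `v = v * v⁻¹`). -/
def vertexEl (G : DGraph) (v : G.V) : GIS G :=
  GIS.mk (GPath.ofVertex G v) (GPath.ofVertex G v) rfl

/-- The element of `GIS G` corresponding to an edge `e` (i.e. `e = e * r(e)⁻¹`). -/
def edgeEl (G : DGraph) (e : G.Ed) : GIS G :=
  GIS.mk (GPath.ofEdge G e) (GPath.ofVertex G (G.rng e)) rfl

/-- The inverse operation on `GIS G`: `(x y⁻¹)⁻¹ = y x⁻¹`. -/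
def GIS.inv {G : DGraph} : GIS G → GIS G
  | GIS.zero => GIS.zero
  | GIS.mk x y h => GIS.mk y x h.symm

/-- `a` lies in the principal left ideal generated by `b` (`S¹a ⊆ S¹b`). -/
def GreenLeL {G : DGraph} (a b : GIS G) : Prop := a = b ∨ ∃ c, a = c * b

/-- `a` lies in the principal right ideal generated by `b` (`aS¹ ⊆ bS¹`). -/
def GreenLeR {G : DGraph} (a b : GIS G) : Prop := a = b ∨ ∃ c, a = b * c

/-- `a` lies in the principal two-sided ideal generated by `b` (`S¹aS¹ ⊆ S¹bS¹`). -/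
def GreenLeJ {G : DGraph} (a b : GIS G) : Prop :=
  a = b ∨ (∃ c, a = c * b) ∨ (∃ c, a = b * c) ∨ (∃ c d, a = c * b * d)

/-- Green's `L`-relation. -/
def GreenEqL {G : DGraph} (a b : GIS G) : Prop := GreenLeL a b ∧ GreenLeL b a

/-- Green's `R`-relation. -/
def GreenEqR {G : DGraph} (a b : GIS G) : Prop := GreenLeR a b ∧ GreenLeR b a

/-- Green's `J`-relation. -/
def GreenEqJ {G : DGraph} (a b : GIS G) : Prop := GreenLeJ a b ∧ GreenLeJ b a

/-- There is a (possibly trivial) directed path from `v` to `w` in `G`. -/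
def GConnected (G : DGraph) (v w : G.V) : Prop := ∃ t : GPath G, t.start = v ∧ t.ran = w

/-- `I` is a (two-sided) ideal of `GIS G`. -/
def GISIdeal {G : DGraph} (I : Set (GIS G)) : Prop :=
  ∀ a ∈ I, ∀ c : GIS G, a * c ∈ I ∧ c * a ∈ I

/-- `R` is the Rees congruence of some ideal `I`, i.e. `R = (I × I) ∪ Δ`. -/
def IsReesCon {G : DGraph} (R : Con (GIS G)) : Prop :=
  ∃ I : Set (GIS G), GISIdeal I ∧ ∀ a b : GIS G, R a b ↔ (a ∈ I ∧ b ∈ I) ∨ a = b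

/-- The only congruences on `GIS G` are the universal one and the diagonal. -/
def CongFree (G : DGraph) : Prop :=
  ∀ R : Con (GIS G), (∀ a b : GIS G, R a b) ∨ (∀ a b : GIS G, R a b ↔ a = b)

/-- The natural partial order on the inverse semigroup `GIS G`:
`a ≤ b` iff `a = ε * b` for some idempotent `ε`. -/
def natLe {G : DGraph} (a b : GIS G) : Prop := ∃ ε : GIS G, ε * ε = ε ∧ a = ε * b

/-- The graph obtained from `G` by deleting the vertices in `S` and all
edges incident to them. -/
def DGraph.delete (G : DGraph) (S : Set G.V) : DGraph where
  V := {v : G.V // v ∉ S}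
  Ed := {e : G.Ed // G.src e ∉ S ∧ G.rng e ∉ S}
  src e := ⟨G.src e.1, e.2.1⟩
  rng e := ⟨G.rng e.1, e.2.2⟩

/-- The graph with a single vertex and `n` loops; its graph inverse semigroup
is the polycyclic monoid `Pₙ`. -/
def polyGraph (n : ℕ) : DGraph :=
  ⟨PUnit, Fin n, fun _ => PUnit.unit, fun _ => PUnit.unit⟩


section Aux
variable {G : DGraph}

theorem GPath.ext' {p q : GPath G} (h1 : p.start = q.start) (h2 : p.edges = q.edges) : p = q := by
  cases p; cases q; cases h1; cases h2; rfl

theorem DGraph.chain_prefix' (G : DGraph) {v : G.V} {l1 l2 : List G.Ed}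
    (h : G.Chain v (l1 ++ l2)) : G.Chain v l1 := by
  induction l1 generalizing v with
  | nil => trivial
  | cons e es ih => exact ⟨h.1, ih h.2⟩

namespace GIS

theorem zero_mul' (a : GIS G) : (0 : GIS G) * a = 0 := rfl

theorem mul_zero' (a : GIS G) : a * (0 : GIS G) = 0 := by cases a <;> rfl

theorem mk_ne_zero (x y : GPath G) (h : x.ran = y.ran) : GIS.mk x y h ≠ 0 := fun hc =>
  by cases hc

theorem mk_mul_mk_of_le {x y p q : GPath G} (hxy : x.ran = y.ran) (hpq : p.ran = q.ran)
    (h1 : y.IsPrefixOf p) (h' : (x.append (y.remainder p h1) hxy).ran = q.ran) :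
    (GIS.mk x y hxy * GIS.mk p q hpq) = GIS.mk (x.append (y.remainder p h1) hxy) q h' := by
  show GIS.gmul _ _ = _
  rw [GIS.gmul, dif_pos h1]

theorem mk_mul_mk_of_ge {x y p q : GPath G} (hxy : x.ran = y.ran) (hpq : p.ran = q.ran)
    (h1 : ¬ y.IsPrefixOf p) (h2 : p.IsPrefixOf y)
    (h' : x.ran = (q.append (p.remainder y h2) hpq.symm).ran) :
    (GIS.mk x y hxy * GIS.mk p q hpq) = GIS.mk x (q.append (p.remainder y h2) hpq.symm) h' := by
  show GIS.gmul _ _ = _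
  rw [GIS.gmul, dif_neg h1, dif_pos h2]

theorem mk_mul_mk_of_incomp {x y p q : GPath G} (hxy : x.ran = y.ran) (hpq : p.ran = q.ran)
    (h1 : ¬ y.IsPrefixOf p) (h2 : ¬ p.IsPrefixOf y) :
    (GIS.mk x y hxy * GIS.mk p q hpq) = 0 := by
  show GIS.gmul _ _ = _
  rw [GIS.gmul, dif_neg h1, dif_neg h2]
  rfl

end GIS

namespace GPath

@[simp] theorem append_start (p q : GPath G) (h : p.ran = q.start) :
    (p.append q h).start = p.start := rfl

@[simp] theorem append_edges (p q : GPath G) (h : p.ran = q.start) :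
    (p.append q h).edges = p.edges ++ q.edges := rfl

@[simp] theorem remainder_start (y p : GPath G) (h : y.IsPrefixOf p) :
    (y.remainder p h).start = y.ran := rfl

@[simp] theorem remainder_edges (y p : GPath G) (h : y.IsPrefixOf p) :
    (y.remainder p h).edges = p.edges.drop y.edges.length := rfl

theorem isPrefixOf_refl (p : GPath G) : p.IsPrefixOf p := ⟨rfl, List.prefix_refl _⟩

theorem ofVertex_isPrefixOf (p : GPath G) (v : G.V) (h : p.start = v) :
    (ofVertex G v).IsPrefixOf p := ⟨h.symm, List.nil_prefix⟩

theorem isPrefixOf_append (p q : GPath G) (h : p.ran = q.start) :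
    p.IsPrefixOf (p.append q h) := ⟨rfl, List.prefix_append _ _⟩

theorem remainder_self (x : GPath G) (h : x.IsPrefixOf x) :
    x.remainder x h = ofVertex G x.ran :=
  GPath.ext' rfl (by simp [ofVertex])

theorem append_nil (x Z : GPath G) (h : x.ran = Z.start) (hZ : Z.edges = []) :
    x.append Z h = x :=
  GPath.ext' rfl (by simp [hZ])

theorem append_ofVertex (x : GPath G) (h : x.ran = (ofVertex G x.ran).start) :
    x.append (ofVertex G x.ran) h = x :=
  GPath.ext' rfl (by simp [ofVertex])

theorem ofVertex_append (v : G.V) (q : GPath G) (h : (ofVertex G v).ran = q.start) :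
    (ofVertex G v).append q h = q :=
  GPath.ext' h (by simp [ofVertex])

theorem remainder_append (p q : GPath G) (h : p.ran = q.start)
    (hpre : p.IsPrefixOf (p.append q h)) : p.remainder (p.append q h) hpre = q :=
  GPath.ext' (by simp [h]) (by simp)

end GPath

namespace GIS

/-- `x y⁻¹ · y q⁻¹ = x q⁻¹`. -/
theorem mk_mul_mk_cancel {x y q : GPath G} (hxy : x.ran = y.ran) (hyq : y.ran = q.ran) :
    GIS.mk x y hxy * GIS.mk y q hyq = GIS.mk x q (hxy.trans hyq) := by
  rw [GIS.mk_mul_mk_of_le hxy hyq (GPath.isPrefixOf_refl y)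
    (by erw [GPath.append_ran, GPath.remainder_ran]; exact hyq)]
  congr 1
  exact GPath.append_nil x _ _ (by simp)

theorem mul_vertexEl {X Y : GPath G} (h : X.ran = Y.ran) {w : G.V} (hY : Y.start = w) :
    GIS.mk X Y h * vertexEl G w = GIS.mk X Y h := by
  by_cases hy : Y.IsPrefixOf (GPath.ofVertex G w)
  · have hYo : Y = GPath.ofVertex G w := by
      apply GPath.ext' hY
      simpa [GPath.ofVertex] using List.prefix_nil.mp hy.2
    subst hYo
    rw [vertexEl, GIS.mk_mul_mk_cancel]
  · rw [vertexEl, GIS.mk_mul_mk_of_ge h rfl hy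
      (GPath.ofVertex_isPrefixOf Y w hY) (by erw [GPath.append_ran, GPath.remainder_ran]; exact h)]
    congr 1
    apply GPath.ext'
    · simpa [GPath.ofVertex] using hY.symm
    · simp [GPath.ofVertex]

theorem vertexEl_mul {X Y : GPath G} (h : X.ran = Y.ran) {w : G.V} (hX : X.start = w) :
    vertexEl G w * GIS.mk X Y h = GIS.mk X Y h := by
  rw [vertexEl, GIS.mk_mul_mk_of_le rfl h (GPath.ofVertex_isPrefixOf X w hX)
    (by erw [GPath.append_ran, GPath.remainder_ran]; exact h)]
  congr 1
  apply GPath.ext'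
  · simpa [GPath.ofVertex] using hX.symm
  · simp [GPath.ofVertex]

end GIS

end Aux


section Aux2
variable {G : DGraph}

theorem GIS.mk_eq_mk {x x' y y' : GPath G} {h : x.ran = y.ran} (hx : x = x') (hy : y = y')
    (h' : x'.ran = y'.ran) : GIS.mk x y h = GIS.mk x' y' h' := by
  subst hx; subst hy; rfl

theorem prefix_drop_nil {α : Type*} {l1 l2 : List α} (h : l1 <+: l2)
    (hd : l2.drop l1.length = []) : l1 = l2 := by
  obtain ⟨t, rfl⟩ := h
  rw [List.drop_left] at hd
  simp [hd]

theorem GIS.mk_append_mul {p x y t₀ : GPath G} (hx0 : x.ran = t₀.start) (hy0 : y.ran = t₀.start)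
    (h1 : p.ran = (x.append t₀ hx0).ran) (hxy : x.ran = y.ran)
    (h3 : p.ran = (y.append t₀ hy0).ran) :
    GIS.mk p (x.append t₀ hx0) h1 * GIS.mk x y hxy = GIS.mk p (y.append t₀ hy0) h3 := by
  by_cases hpre : (x.append t₀ hx0).IsPrefixOf x
  · have ht0 : t₀.edges = [] := by
      have hl := hpre.2.length_le
      rw [GPath.append_edges, List.length_append] at hl
      exact List.length_eq_zero_iff.mp (by omega)
    have hxx : x.append t₀ hx0 = x := GPath.append_nil _ _ _ ht0
    rw [GIS.mk_eq_mk (h' := by rw [← hxx]; exact h1) rfl hxx, GIS.mk_mul_mk_cancel]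
    exact GIS.mk_eq_mk rfl (GPath.append_nil _ _ _ ht0).symm _
  · have hx : x.IsPrefixOf (x.append t₀ hx0) := GPath.isPrefixOf_append _ _ _
    rw [GIS.mk_mul_mk_of_ge h1 hxy hpre hx
      (by erw [GPath.append_ran, GPath.remainder_ran]; exact h1)]
    refine GIS.mk_eq_mk rfl ?_ h3
    refine GPath.ext' rfl ?_
    erw [GPath.append_edges, GPath.remainder_edges]; simp

theorem reach_factor (hconn : ∀ v w : G.V, GConnected G v w) (x y : GPath G)
    (hxy : x.ran = y.ran) (p q : GPath G) (hpq : p.ran = q.ran) :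
    ∃ s t : GIS G, GIS.mk p q hpq = s * GIS.mk x y hxy * t := by
  obtain ⟨t₀, ht0s, ht0r⟩ := hconn x.ran p.ran
  have hx0 : x.ran = t₀.start := ht0s.symm
  have hy0 : y.ran = t₀.start := hxy.symm.trans ht0s.symm
  have h1 : p.ran = (x.append t₀ hx0).ran := by erw [GPath.append_ran]; exact ht0r.symm
  have h3 : p.ran = (y.append t₀ hy0).ran := by erw [GPath.append_ran]; exact ht0r.symm
  refine ⟨GIS.mk p (x.append t₀ hx0) h1,
    GIS.mk (y.append t₀ hy0) q (by erw [GPath.append_ran]; exact ht0r.trans hpq), ?_⟩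
  rw [GIS.mk_append_mul hx0 hy0 h1 hxy h3, GIS.mk_mul_mk_cancel]

theorem univ_of_zero (hconn : ∀ v w : G.V, GConnected G v w) (R : Con (GIS G))
    {x y : GPath G} {hxy : x.ran = y.ran} (h : R (GIS.mk x y hxy) 0) :
    ∀ s t : GIS G, R s t := by
  have key : ∀ c : GIS G, R c 0 := by
    intro c
    cases c with
    | zero => exact R.refl 0
    | mk p q hpq =>
      obtain ⟨s, t, hst⟩ := reach_factor hconn x y hxy p q hpq
      have h2 := R.mul (R.mul (R.refl s) h) (R.refl t)
      rw [GIS.mul_zero', GIS.zero_mul', ← hst] at h2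
      exact h2
  intro s t
  exact R.trans (key s) (R.symm (key t))

theorem exists_other_edge (hdeg : ∀ v : G.V, ∃ e f : G.Ed, e ≠ f ∧ G.src e = v ∧ G.src f = v)
    (u : G.V) (f : G.Ed) : ∃ g : G.Ed, G.src g = u ∧ g ≠ f := by
  obtain ⟨e1, e2, hne, h1, h2⟩ := hdeg u
  by_cases h : e1 = f
  · exact ⟨e2, h2, by rw [← h]; exact hne.symm⟩
  · exact ⟨e1, h1, h⟩

theorem conj_vertexEl (g : G.Ed) :
    GIS.mk (GPath.ofVertex G (G.rng g)) (GPath.ofEdge G g) rfl * vertexEl G (G.src g) *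
      GIS.mk (GPath.ofEdge G g) (GPath.ofVertex G (G.rng g)) rfl = vertexEl G (G.rng g) := by
  have h0 : vertexEl G (G.src g) = vertexEl G (GPath.ofEdge G g).start := rfl
  erw [h0, GIS.mul_vertexEl _ rfl, GIS.mk_mul_mk_cancel]
  rfl

theorem conj_kill_left {g : G.Ed} {z w : GPath G} {h : z.ran = w.ran} {f : G.Ed} {r : List G.Ed}
    (hze : z.edges = f :: r) (hfg : f ≠ g) :
    GIS.mk (GPath.ofVertex G (G.rng g)) (GPath.ofEdge G g) rfl * GIS.mk z w h *
      GIS.mk (GPath.ofEdge G g) (GPath.ofVertex G (G.rng g)) rfl = 0 := by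
  erw [GIS.mk_mul_mk_of_incomp, GIS.zero_mul']
  · intro hp
    have := hp.2
    rw [hze] at this
    simp only [GPath.ofEdge] at this
    rw [List.cons_prefix_cons] at this
    exact hfg this.1.symm
  · intro hp
    have := hp.2
    rw [hze] at this
    simp only [GPath.ofEdge] at this
    rw [List.cons_prefix_cons] at this
    exact hfg this.1
end Aux2


section Aux3
variable {G : DGraph}

theorem conj_kill_right {g : G.Ed} {u : G.V} (hu : G.src g = u) {S : GPath G}
    {f : G.Ed} {r : List G.Ed} (hSe : S.edges = f :: r) (hfg : f ≠ g)
    (h : (GPath.ofVertex G u).ran = S.ran) :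
    GIS.mk (GPath.ofVertex G (G.rng g)) (GPath.ofEdge G g) rfl * GIS.mk (GPath.ofVertex G u) S h *
      GIS.mk (GPath.ofEdge G g) (GPath.ofVertex G (G.rng g)) rfl = 0 := by
  have h1 : ¬ (GPath.ofEdge G g).IsPrefixOf (GPath.ofVertex G u) := by
    intro hp
    have := hp.2
    simp [GPath.ofEdge, GPath.ofVertex] at this
  have h2 : (GPath.ofVertex G u).IsPrefixOf (GPath.ofEdge G g) :=
    ⟨hu.symm, List.nil_prefix⟩
  rw [GIS.mk_mul_mk_of_ge (x := GPath.ofVertex G (G.rng g)) (y := GPath.ofEdge G g) rfl h h1 h2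
    (by erw [GPath.append_ran, GPath.remainder_ran]; rfl)]
  erw [GIS.mk_mul_mk_of_incomp]
  · intro hp
    have h3 := hp.2
    simp only [GPath.append_edges, GPath.remainder_edges, GPath.ofVertex, GPath.ofEdge,
      List.length_nil, List.drop_zero, hSe, List.cons_append] at h3
    rw [List.cons_prefix_cons] at h3
    exact hfg h3.1
  · intro hp
    have h3 := hp.2
    simp only [GPath.append_edges, GPath.remainder_edges, GPath.ofVertex, GPath.ofEdge,
      List.length_nil, List.drop_zero, hSe, List.cons_append] at h3
    rw [List.cons_prefix_cons] at h3
    exact hfg h3.1.symm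

theorem univ_case1 (hconn : ∀ v w : G.V, GConnected G v w)
    (hdeg : ∀ v : G.V, ∃ e f : G.Ed, e ≠ f ∧ G.src e = v ∧ G.src f = v)
    (R : Con (GIS G)) (u : G.V) {Z W : GPath G} {h : Z.ran = W.ran} (hZs : Z.start = u)
    {f : G.Ed} {r : List G.Ed} (hZe : Z.edges = f :: r)
    (hRel : R (vertexEl G u) (GIS.mk Z W h)) : ∀ s t : GIS G, R s t := by
  obtain ⟨g, hgu, hgf⟩ := exists_other_edge hdeg u f
  subst hgu
  have hA := R.mul (R.mul (R.refl (GIS.mk (GPath.ofVertex G (G.rng g)) (GPath.ofEdge G g) rfl))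
    hRel) (R.refl (GIS.mk (GPath.ofEdge G g) (GPath.ofVertex G (G.rng g)) rfl))
  rw [conj_vertexEl g, conj_kill_left hZe (Ne.symm hgf)] at hA
  exact univ_of_zero hconn R hA

theorem univ_case2 (hconn : ∀ v w : G.V, GConnected G v w)
    (hdeg : ∀ v : G.V, ∃ e f : G.Ed, e ≠ f ∧ G.src e = v ∧ G.src f = v)
    (R : Con (GIS G)) (u : G.V) {W : GPath G} {h : (GPath.ofVertex G u).ran = W.ran}
    {f : G.Ed} {r : List G.Ed} (hWe : W.edges = f :: r)
    (hRel : R (vertexEl G u) (GIS.mk (GPath.ofVertex G u) W h)) : ∀ s t : GIS G, R s t := by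
  obtain ⟨g, hgu, hgf⟩ := exists_other_edge hdeg u f
  subst hgu
  have hA := R.mul (R.mul (R.refl (GIS.mk (GPath.ofVertex G (G.rng g)) (GPath.ofEdge G g) rfl))
    hRel) (R.refl (GIS.mk (GPath.ofEdge G g) (GPath.ofVertex G (G.rng g)) rfl))
  rw [conj_vertexEl g, conj_kill_right rfl hWe (Ne.symm hgf)] at hA
  exact univ_of_zero hconn R hA

end Aux3


section Aux4
variable {G : DGraph}

theorem univ_of_ne (hconn : ∀ v w : G.V, GConnected G v w)
    (hdeg : ∀ v : G.V, ∃ e f : G.Ed, e ≠ f ∧ G.src e = v ∧ G.src f = v)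
    (R : Con (GIS G)) {x y p q : GPath G} {hxy : x.ran = y.ran} {hpq : p.ran = q.ran}
    (hR : R (GIS.mk x y hxy) (GIS.mk p q hpq)) (hne : GIS.mk x y hxy ≠ GIS.mk p q hpq) :
    ∀ s t : GIS G, R s t := by
  have hL : GIS.mk (GPath.ofVertex G x.ran) x rfl * GIS.mk x y hxy *
      GIS.mk y (GPath.ofVertex G x.ran) hxy.symm = vertexEl G x.ran := by
    erw [GIS.mk_mul_mk_cancel, GIS.mk_mul_mk_cancel]; rfl
  have hd := R.mul (R.mul (R.refl (GIS.mk (GPath.ofVertex G x.ran) x rfl)) hR)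
    (R.refl (GIS.mk y (GPath.ofVertex G x.ran) hxy.symm))
  rw [hL] at hd
  by_cases hxp : x.IsPrefixOf p
  · have e1 : GIS.mk (GPath.ofVertex G x.ran) x rfl * GIS.mk p q hpq
        = GIS.mk (x.remainder p hxp) q (by rw [GPath.remainder_ran]; exact hpq) := by
      rw [GIS.mk_mul_mk_of_le (x := GPath.ofVertex G x.ran) (y := x) (p := p) (q := q)
        rfl hpq hxp (by erw [GPath.append_ran, GPath.remainder_ran]; exact hpq)]
      exact GIS.mk_eq_mk (GPath.ofVertex_append x.ran (x.remainder p hxp) rfl) rfl _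
    by_cases hqy : q.IsPrefixOf y
    · have e2 : GIS.mk (x.remainder p hxp) q (by rw [GPath.remainder_ran]; exact hpq) *
          GIS.mk y (GPath.ofVertex G x.ran) hxy.symm
          = GIS.mk ((x.remainder p hxp).append (q.remainder y hqy)
              (by rw [GPath.remainder_ran, GPath.remainder_start]; exact hpq))
            (GPath.ofVertex G x.ran)
            (by erw [GPath.append_ran, GPath.remainder_ran]; exact hxy.symm) := by
        rw [GIS.mk_mul_mk_of_le (x := x.remainder p hxp) (y := q) (p := y)
          (q := GPath.ofVertex G x.ran) _ hxy.symm hqy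
          (by erw [GPath.append_ran, GPath.remainder_ran]; exact hxy.symm)]
      rw [e1, e2] at hd
      cases hSe : ((x.remainder p hxp).append (q.remainder y hqy)
          (by rw [GPath.remainder_ran, GPath.remainder_start]; exact hpq)).edges with
      | nil =>
        rw [GPath.append_edges, List.append_eq_nil_iff] at hSe
        simp only [GPath.remainder_edges] at hSe
        have hxp' : x = p := GPath.ext' hxp.1 (prefix_drop_nil hxp.2 hSe.1)
        have hqy' : q = y := GPath.ext' hqy.1 (prefix_drop_nil hqy.2 hSe.2)
        exact absurd (GIS.mk_eq_mk hxp' hqy'.symm hpq) hne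
      | cons f r => exact univ_case1 hconn hdeg R x.ran rfl hSe hd
    · by_cases hyq : y.IsPrefixOf q
      · have e2 : GIS.mk (x.remainder p hxp) q (by rw [GPath.remainder_ran]; exact hpq) *
            GIS.mk y (GPath.ofVertex G x.ran) hxy.symm
            = GIS.mk (x.remainder p hxp) (y.remainder q hyq)
              (by rw [GPath.remainder_ran, GPath.remainder_ran]; exact hpq) := by
          rw [GIS.mk_mul_mk_of_ge (x := x.remainder p hxp) (y := q) (p := y)
            (q := GPath.ofVertex G x.ran) _ hxy.symm hqy hyq
            (by erw [GPath.append_ran, GPath.remainder_ran, GPath.remainder_ran]; exact hpq)]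
          exact GIS.mk_eq_mk rfl (GPath.ofVertex_append x.ran (y.remainder q hyq)
            (by rw [GPath.remainder_start]; exact hxy)) _
        rw [e1, e2] at hd
        cases h1e : (x.remainder p hxp).edges with
        | cons f r => exact univ_case1 hconn hdeg R x.ran rfl h1e hd
        | nil =>
          have h1 : x.remainder p hxp = GPath.ofVertex G x.ran :=
            GPath.ext' rfl (h1e.trans rfl)
          have hrr : (x.remainder p hxp).ran = (y.remainder q hyq).ran := by
            rw [GPath.remainder_ran, GPath.remainder_ran]; exact hpq
          rw [GIS.mk_eq_mk h1 rfl ((congrArg GPath.ran h1).symm.trans hrr)] at hd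
          cases h2e : (y.remainder q hyq).edges with
          | nil =>
            simp only [GPath.remainder_edges] at h1e h2e
            have hxp' : x = p := GPath.ext' hxp.1 (prefix_drop_nil hxp.2 h1e)
            have hyq' : y = q := GPath.ext' hyq.1 (prefix_drop_nil hyq.2 h2e)
            exact absurd (GIS.mk_eq_mk hxp' hyq' hpq) hne
          | cons f r => exact univ_case2 hconn hdeg R x.ran h2e hd
      · have e2 : GIS.mk (x.remainder p hxp) q (by rw [GPath.remainder_ran]; exact hpq) *
            GIS.mk y (GPath.ofVertex G x.ran) hxy.symm = 0 :=
          GIS.mk_mul_mk_of_incomp _ _ hqy hyq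
        rw [e1, e2] at hd
        exact univ_of_zero hconn R hd
  · by_cases hpx : p.IsPrefixOf x
    · have e1 : GIS.mk (GPath.ofVertex G x.ran) x rfl * GIS.mk p q hpq
          = GIS.mk (GPath.ofVertex G x.ran) (q.append (p.remainder x hpx) hpq.symm)
            (by erw [GPath.append_ran, GPath.remainder_ran]; rfl) :=
        GIS.mk_mul_mk_of_ge (x := GPath.ofVertex G x.ran) (y := x) (p := p) (q := q)
          rfl hpq hxp hpx _
      by_cases hq2y : (q.append (p.remainder x hpx) hpq.symm).IsPrefixOf y
      · have e2 : GIS.mk (GPath.ofVertex G x.ran) (q.append (p.remainder x hpx) hpq.symm)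
            (by erw [GPath.append_ran, GPath.remainder_ran]; rfl) *
            GIS.mk y (GPath.ofVertex G x.ran) hxy.symm
            = GIS.mk ((q.append (p.remainder x hpx) hpq.symm).remainder y hq2y)
              (GPath.ofVertex G x.ran)
              (by rw [GPath.remainder_ran]; exact hxy.symm) := by
          rw [GIS.mk_mul_mk_of_le (x := GPath.ofVertex G x.ran)
            (y := q.append (p.remainder x hpx) hpq.symm) (p := y)
            (q := GPath.ofVertex G x.ran) _ hxy.symm hq2y
            (by erw [GPath.append_ran, GPath.remainder_ran]; exact hxy.symm)]
          exact GIS.mk_eq_mk (GPath.ofVertex_append x.ran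
            ((q.append (p.remainder x hpx) hpq.symm).remainder y hq2y)
            (by erw [GPath.remainder_start, GPath.append_ran, GPath.remainder_ran] <;> rfl)) rfl _
        rw [e1, e2] at hd
        cases hS2 : ((q.append (p.remainder x hpx) hpq.symm).remainder y hq2y).edges with
        | cons f r =>
          exact univ_case1 hconn hdeg R x.ran
            (by erw [GPath.remainder_start, GPath.append_ran, GPath.remainder_ran] <;> rfl) hS2 hd
        | nil =>
          have hyQ : y = (q.append (p.remainder x hpx) hpq.symm) :=
            (GPath.ext' hq2y.1 (prefix_drop_nil hq2y.2 (by simpa using hS2))).symm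
          have hsne : (p.remainder x hpx).edges ≠ [] := by
            intro hnil
            simp only [GPath.remainder_edges] at hnil
            have hpe : p.edges = x.edges := prefix_drop_nil hpx.2 hnil
            exact hxp ⟨hpx.1.symm, by rw [hpe]⟩
          obtain ⟨f, r', hfr⟩ := List.exists_cons_of_ne_nil hsne
          have hL' : GIS.mk (GPath.ofVertex G p.ran) p rfl * GIS.mk p q hpq *
              GIS.mk q (GPath.ofVertex G p.ran) hpq.symm = vertexEl G p.ran := by
            erw [GIS.mk_mul_mk_cancel, GIS.mk_mul_mk_cancel]; rfl
          have he := R.mul (R.mul (R.refl (GIS.mk (GPath.ofVertex G p.ran) p rfl)) hR)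
            (R.refl (GIS.mk q (GPath.ofVertex G p.ran) hpq.symm))
          rw [hL'] at he
          have e3 : GIS.mk (GPath.ofVertex G p.ran) p rfl * GIS.mk x y hxy
              = GIS.mk (p.remainder x hpx) y (by rw [GPath.remainder_ran]; exact hxy) := by
            rw [GIS.mk_mul_mk_of_le (x := GPath.ofVertex G p.ran) (y := p) (p := x) (q := y)
              rfl hxy hpx (by erw [GPath.append_ran, GPath.remainder_ran]; exact hxy)]
            exact GIS.mk_eq_mk (GPath.ofVertex_append p.ran (p.remainder x hpx) rfl) rfl _
          have hqy' : q.IsPrefixOf y := by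
            rw [hyQ]; exact GPath.isPrefixOf_append _ _ _
          have hnyq : ¬ y.IsPrefixOf q := by
            intro hp2
            have hlen := hp2.2.length_le
            have hye : y.edges = q.edges ++ (p.remainder x hpx).edges := by rw [hyQ]; rfl
            rw [hye, List.length_append] at hlen
            have hpos : 0 < (p.remainder x hpx).edges.length := List.length_pos_iff.mpr hsne
            omega
          have e4 : GIS.mk (p.remainder x hpx) y (by rw [GPath.remainder_ran]; exact hxy) *
              GIS.mk q (GPath.ofVertex G p.ran) hpq.symm
              = GIS.mk (p.remainder x hpx) (q.remainder y hqy')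
                (by rw [GPath.remainder_ran, GPath.remainder_ran]; exact hxy) := by
            rw [GIS.mk_mul_mk_of_ge (x := p.remainder x hpx) (y := y) (p := q)
              (q := GPath.ofVertex G p.ran) _ hpq.symm hnyq hqy'
              (by erw [GPath.append_ran, GPath.remainder_ran, GPath.remainder_ran]; exact hxy)]
            exact GIS.mk_eq_mk rfl (GPath.ofVertex_append p.ran (q.remainder y hqy')
              (by rw [GPath.remainder_start]; exact hpq)) _
          rw [e3, e4] at he
          exact univ_case1 hconn hdeg R p.ran rfl hfr (R.symm he)
      · by_cases hyq2 : y.IsPrefixOf (q.append (p.remainder x hpx) hpq.symm)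
        · have e2 : GIS.mk (GPath.ofVertex G x.ran) (q.append (p.remainder x hpx) hpq.symm)
              (by erw [GPath.append_ran, GPath.remainder_ran]; rfl) *
              GIS.mk y (GPath.ofVertex G x.ran) hxy.symm
              = GIS.mk (GPath.ofVertex G x.ran)
                (y.remainder (q.append (p.remainder x hpx) hpq.symm) hyq2)
                (by erw [GPath.remainder_ran, GPath.append_ran, GPath.remainder_ran]; rfl) := by
            rw [GIS.mk_mul_mk_of_ge (x := GPath.ofVertex G x.ran)
              (y := q.append (p.remainder x hpx) hpq.symm) (p := y)
              (q := GPath.ofVertex G x.ran) _ hxy.symm hq2y hyq2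
              (by erw [GPath.append_ran, GPath.remainder_ran, GPath.append_ran,
                GPath.remainder_ran]; rfl)]
            exact GIS.mk_eq_mk rfl (GPath.ofVertex_append x.ran
              (y.remainder (q.append (p.remainder x hpx) hpq.symm) hyq2)
              (by rw [GPath.remainder_start]; exact hxy)) _
          rw [e1, e2] at hd
          cases hS2 : (y.remainder (q.append (p.remainder x hpx) hpq.symm) hyq2).edges with
          | nil =>
            refine absurd (⟨hyq2.1.symm, ?_⟩ :
              (q.append (p.remainder x hpx) hpq.symm).IsPrefixOf y) hq2y
            rw [prefix_drop_nil hyq2.2 (by simpa using hS2)]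
          | cons f r => exact univ_case2 hconn hdeg R x.ran hS2 hd
        · have e2 : GIS.mk (GPath.ofVertex G x.ran) (q.append (p.remainder x hpx) hpq.symm)
              (by erw [GPath.append_ran, GPath.remainder_ran]; rfl) *
              GIS.mk y (GPath.ofVertex G x.ran) hxy.symm = 0 :=
            GIS.mk_mul_mk_of_incomp _ _ hq2y hyq2
          rw [e1, e2] at hd
          exact univ_of_zero hconn R hd
    · have e1 : GIS.mk (GPath.ofVertex G x.ran) x rfl * GIS.mk p q hpq = 0 :=
        GIS.mk_mul_mk_of_incomp _ _ hxp hpx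
      rw [e1, GIS.zero_mul'] at hd
      exact univ_of_zero hconn R hd

theorem backward_dir (hconn : ∀ v w : G.V, GConnected G v w)
    (hdeg : ∀ v : G.V, ∃ e f : G.Ed, e ≠ f ∧ G.src e = v ∧ G.src f = v) :
    CongFree G := by
  intro R
  by_cases hex : ∃ a b : GIS G, R a b ∧ a ≠ b
  · left
    obtain ⟨a, b, hab, hne⟩ := hex
    cases a with
    | zero =>
      cases b with
      | zero => exact absurd rfl hne
      | mk p q hpq => exact univ_of_zero hconn R (R.symm hab)
    | mk x y hxy =>
      cases b with
      | zero => exact univ_of_zero hconn R hab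
      | mk p q hpq => exact univ_of_ne hconn hdeg R hab hne
  · right
    intro a b
    constructor
    · intro h
      by_contra hne
      exact hex ⟨a, b, h, hne⟩
    · intro h
      exact h ▸ R.refl a

end Aux4


section Aux5
variable {G : DGraph}

theorem GConnected.refl' (v : G.V) : GConnected G v v := ⟨GPath.ofVertex G v, rfl, rfl⟩

theorem GConnected.trans' {u v w : G.V} (h1 : GConnected G u v) (h2 : GConnected G v w) :
    GConnected G u w := by
  obtain ⟨t1, ht1s, ht1r⟩ := h1
  obtain ⟨t2, ht2s, ht2r⟩ := h2
  exact ⟨t1.append t2 (ht1r.trans ht2s.symm), ht1s, by erw [GPath.append_ran]; exact ht2r⟩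

theorem gconn_of_prefix {y p : GPath G} (h : y.IsPrefixOf p) : GConnected G y.ran p.ran :=
  ⟨y.remainder p h, rfl, GPath.remainder_ran _ _ _⟩

/-- Membership in the two-sided ideal generated by `vertexEl v`. -/
def reachSet (G : DGraph) (v : G.V) : GIS G → Prop
  | GIS.zero => True
  | GIS.mk x _ _ => GConnected G v x.ran

@[simp] theorem reachSet_zero (v : G.V) : reachSet G v 0 := trivial

@[simp] theorem reachSet_mk (v : G.V) (x y : GPath G) (h : x.ran = y.ran) :
    reachSet G v (GIS.mk x y h) = GConnected G v x.ran := rfl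

theorem reachSet_mul (v : G.V) (a c : GIS G) (ha : reachSet G v a) :
    reachSet G v (a * c) ∧ reachSet G v (c * a) := by
  cases a with
  | zero =>
    show reachSet G v ((0 : GIS G) * c) ∧ reachSet G v (c * (0 : GIS G))
    rw [GIS.zero_mul', GIS.mul_zero']
    exact ⟨trivial, trivial⟩
  | mk x y h =>
    cases c with
    | zero =>
      show reachSet G v (GIS.mk x y h * 0) ∧ reachSet G v ((0 : GIS G) * GIS.mk x y h)
      rw [GIS.zero_mul', GIS.mul_zero']
      exact ⟨trivial, trivial⟩
    | mk p q hpq =>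
      rw [reachSet_mk] at ha
      constructor
      · by_cases h1 : y.IsPrefixOf p
        · erw [GIS.mk_mul_mk_of_le _ _ h1
            (by erw [GPath.append_ran, GPath.remainder_ran]; exact hpq), reachSet_mk,
            GPath.append_ran, GPath.remainder_ran]
          exact GConnected.trans' (h ▸ ha) (gconn_of_prefix h1)
        · by_cases h2 : p.IsPrefixOf y
          · rw [GIS.mk_mul_mk_of_ge _ _ h1 h2
              (by erw [GPath.append_ran, GPath.remainder_ran]; exact h), reachSet_mk]
            exact ha
          · rw [GIS.mk_mul_mk_of_incomp _ _ h1 h2]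
            exact trivial
      · by_cases h1 : q.IsPrefixOf x
        · erw [GIS.mk_mul_mk_of_le _ _ h1
            (by erw [GPath.append_ran, GPath.remainder_ran]; exact h), reachSet_mk,
            GPath.append_ran, GPath.remainder_ran]
          exact ha
        · by_cases h2 : x.IsPrefixOf q
          · rw [GIS.mk_mul_mk_of_ge _ _ h1 h2
              (by erw [GPath.append_ran, GPath.remainder_ran]; exact hpq), reachSet_mk]
            rw [hpq]
            exact GConnected.trans' ha (gconn_of_prefix h2)
          · rw [GIS.mk_mul_mk_of_incomp _ _ h1 h2]
            exact trivial

/-- The Rees congruence of the ideal generated by `vertexEl v`. -/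
def reesCon (G : DGraph) (v : G.V) : Con (GIS G) where
  r a b := (reachSet G v a ∧ reachSet G v b) ∨ a = b
  iseqv := by
    refine ⟨fun a => Or.inr rfl, ?_, ?_⟩
    · rintro a b (⟨h1, h2⟩ | rfl)
      · exact Or.inl ⟨h2, h1⟩
      · exact Or.inr rfl
    · rintro a b c (⟨h1, h2⟩ | rfl) h3
      · rcases h3 with ⟨_, h4⟩ | rfl
        · exact Or.inl ⟨h1, h4⟩
        · exact Or.inl ⟨h1, h2⟩
      · exact h3
  mul' := by
    rintro a b c d (⟨h1, h2⟩ | rfl) hcd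
    · rcases hcd with ⟨h3, h4⟩ | rfl
      · exact Or.inl ⟨(reachSet_mul _ _ _ h1).1, (reachSet_mul _ _ _ h2).1⟩
      · exact Or.inl ⟨(reachSet_mul _ _ _ h1).1, (reachSet_mul _ _ _ h2).1⟩
    · rcases hcd with ⟨h3, h4⟩ | rfl
      · exact Or.inl ⟨(reachSet_mul _ _ _ h3).2, (reachSet_mul _ _ _ h4).2⟩
      · exact Or.inr rfl

theorem conn_of_congFree (hCF : CongFree G) : ∀ v w : G.V, GConnected G v w := by
  intro v w
  by_contra hnc
  rcases hCF (reesCon G v) with huniv | hdiag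
  · rcases huniv (vertexEl G w) 0 with ⟨h1, _⟩ | heq
    · exact hnc h1
    · exact GIS.mk_ne_zero _ _ _ heq
  · exact GIS.mk_ne_zero _ _ _
      ((hdiag (vertexEl G v) 0).mp (Or.inl ⟨GConnected.refl' v, trivial⟩))

end Aux5


section Aux6
variable {G : DGraph}

theorem GIS.mk_inj {x y x' y' : GPath G} {h : x.ran = y.ran} {h' : x'.ran = y'.ran}
    (heq : GIS.mk x y h = GIS.mk x' y' h') : x = x' ∧ y = y' := by
  injection heq with h1 h2
  exact ⟨h1, h2⟩

/-- Extend a path by a list of composable edges. -/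
def GPath.push (x : GPath G) (l : List G.Ed) (hl : G.Chain x.ran l) : GPath G :=
  ⟨x.start, x.edges ++ l, G.chain_append x.chain hl⟩

@[simp] theorem GPath.push_start (x : GPath G) (l : List G.Ed) (hl : G.Chain x.ran l) :
    (x.push l hl).start = x.start := rfl

@[simp] theorem GPath.push_edges (x : GPath G) (l : List G.Ed) (hl : G.Chain x.ran l) :
    (x.push l hl).edges = x.edges ++ l := rfl

@[simp] theorem GPath.push_ran (x : GPath G) (l : List G.Ed) (hl : G.Chain x.ran l) :
    (x.push l hl).ran = G.ranAux x.ran l := by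
  show G.ranAux x.start (x.edges ++ l) = _
  rw [DGraph.ranAux_append]
  rfl

/-- `(x·l) (y·l)⁻¹`. -/
def mkExt (x y : GPath G) (h : x.ran = y.ran) (l : List G.Ed) (hl : G.Chain x.ran l) : GIS G :=
  GIS.mk (x.push l hl) (y.push l (h ▸ hl)) (by rw [GPath.push_ran, GPath.push_ran, h])

theorem mkExt_congr {x y x' y' : GPath G} {h : x.ran = y.ran} {h' : x'.ran = y'.ran}
    {l l' : List G.Ed} {hl : G.Chain x.ran l} {hl' : G.Chain x'.ran l'}
    (hx : x.start = x'.start) (hy : y.start = y'.start)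
    (hxe : x.edges ++ l = x'.edges ++ l') (hye : y.edges ++ l = y'.edges ++ l') :
    mkExt x y h l hl = mkExt x' y' h' l' hl' := by
  unfold mkExt
  refine GIS.mk_eq_mk ?_ ?_ _
  · exact GPath.ext' hx hxe
  · exact GPath.ext' hy hye

theorem mkExt_nil (x y : GPath G) (h : x.ran = y.ran) (hl : G.Chain x.ran []) :
    mkExt x y h [] hl = GIS.mk x y h := by
  show GIS.mk (x.push [] hl) (y.push [] (h ▸ hl)) _ = GIS.mk x y h
  refine GIS.mk_eq_mk ?_ ?_ h
  · exact GPath.ext' rfl (by simp)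
  · exact GPath.ext' rfl (by simp)

theorem chain_rep_mono {e : G.Ed} {u : G.V} {n m : ℕ} (hle : n ≤ m)
    (h : G.Chain u (List.replicate m e)) : G.Chain u (List.replicate n e) := by
  have hsplit : List.replicate m e = List.replicate n e ++ List.replicate (m - n) e := by
    rw [← List.replicate_add]; congr 1; omega
  rw [hsplit] at h
  exact G.chain_prefix' h

theorem chain_rep_drop {e : G.Ed} {u : G.V} {n m : ℕ} (hle : n ≤ m)
    (h : G.Chain u (List.replicate m e)) :
    G.Chain (G.ranAux u (List.replicate n e)) (List.replicate (m - n) e) := by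
  have hsplit : List.replicate m e = List.replicate n e ++ List.replicate (m - n) e := by
    rw [← List.replicate_add]; congr 1; omega
  rw [hsplit] at h
  exact G.chain_append_right h

theorem rep_prefix_rep {α : Type*} {a : α} {n m : ℕ} (h : n ≤ m) :
    List.replicate n a <+: List.replicate m a :=
  ⟨List.replicate (m - n) a, by rw [← List.replicate_add]; congr 1; omega⟩

theorem eq_rep_of_prefix_rep {α : Type*} {a : α} {n : ℕ} {l : List α}
    (h : l <+: List.replicate n a) : l = List.replicate l.length a ∧ l.length ≤ n := by
  constructor
  · exact List.eq_replicate_length.mpr fun b hb =>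
      List.eq_of_mem_replicate (h.subset hb)
  · simpa using h.length_le

/-- The collapsing relation for a vertex of out-degree one: identify
`(x·eⁿ)(y·eⁿ)⁻¹` for all `n`. -/
def pcRel (e : G.Ed) (a b : GIS G) : Prop :=
  a = b ∨ ∃ (x y : GPath G) (h : x.ran = y.ran) (n m : ℕ)
    (hn : G.Chain x.ran (List.replicate n e)) (hm : G.Chain x.ran (List.replicate m e)),
    a = mkExt x y h (List.replicate n e) hn ∧ b = mkExt x y h (List.replicate m e) hm

theorem pcRel_refl (e : G.Ed) (a : GIS G) : pcRel e a a := Or.inl rfl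

theorem pcRel_symm {e : G.Ed} {a b : GIS G} (h : pcRel e a b) : pcRel e b a := by
  rcases h with rfl | ⟨x, y, h, n, m, hn, hm, ha, hb⟩
  · exact Or.inl rfl
  · exact Or.inr ⟨x, y, h, m, n, hm, hn, hb, ha⟩

theorem shift_repr {e : G.Ed} {x y x' y' : GPath G} {h : x.ran = y.ran} {h' : x'.ran = y'.ran}
    {n m : ℕ} {hn : G.Chain x.ran (List.replicate n e)} {hm : G.Chain x'.ran (List.replicate m e)}
    (hle : n ≤ m)
    (heq : mkExt x y h (List.replicate n e) hn = mkExt x' y' h' (List.replicate m e) hm) :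
    ∀ (k : ℕ) (hk : G.Chain x.ran (List.replicate k e)),
      ∃ (hk' : G.Chain x'.ran (List.replicate (m - n + k) e)),
        mkExt x y h (List.replicate k e) hk
          = mkExt x' y' h' (List.replicate (m - n + k) e) hk' := by
  obtain ⟨hx, hy⟩ := GIS.mk_inj heq
  have hxs : x.start = x'.start := by
    have := congrArg GPath.start hx
    simpa using this
  have hys : y.start = y'.start := by
    have := congrArg GPath.start hy
    simpa using this
  have hxe : x.edges = x'.edges ++ List.replicate (m - n) e := by
    have h1 : x.edges ++ List.replicate n e
        = (x'.edges ++ List.replicate (m - n) e) ++ List.replicate n e := by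
      have := congrArg GPath.edges hx
      simp only [GPath.push_edges] at this
      rw [this, List.append_assoc, ← List.replicate_add]
      congr 2
      omega
    exact List.append_cancel_right h1
  have hye : y.edges = y'.edges ++ List.replicate (m - n) e := by
    have h1 : y.edges ++ List.replicate n e
        = (y'.edges ++ List.replicate (m - n) e) ++ List.replicate n e := by
      have := congrArg GPath.edges hy
      simp only [GPath.push_edges] at this
      rw [this, List.append_assoc, ← List.replicate_add]
      congr 2
      omega
    exact List.append_cancel_right h1
  have hxr : x.ran = G.ranAux x'.ran (List.replicate (m - n) e) := by
    show G.ranAux x.start x.edges = _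
    rw [hxe, hxs, DGraph.ranAux_append]
    rfl
  intro k hk
  have hk' : G.Chain x'.ran (List.replicate (m - n + k) e) := by
    rw [List.replicate_add]
    exact G.chain_append (chain_rep_mono (by omega) hm) (by rw [← hxr]; exact hk)
  refine ⟨hk', mkExt_congr hxs hys ?_ ?_⟩
  · rw [hxe, List.append_assoc, ← List.replicate_add]
  · rw [hye, List.append_assoc, ← List.replicate_add]

theorem pcRel_trans {e : G.Ed} {a b c : GIS G} (h1 : pcRel e a b) (h2 : pcRel e b c) :
    pcRel e a c := by
  rcases h1 with rfl | ⟨x, y, h, n1, n2, hn1, hn2, ha, hb⟩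
  · exact h2
  rcases h2 with rfl | ⟨x', y', h', m1, m2, hm1, hm2, hb', hc⟩
  · exact Or.inr ⟨x, y, h, n1, n2, hn1, hn2, ha, hb⟩
  rcases le_total n2 m1 with hle | hle
  · obtain ⟨hk', heq⟩ := shift_repr hle (hb.symm.trans hb') n1 hn1
    exact Or.inr ⟨x', y', h', m1 - n2 + n1, m2, hk', hm2, ha.trans heq, hc⟩
  · obtain ⟨hk', heq⟩ := shift_repr hle (hb'.symm.trans hb) m2 hm2
    exact Or.inr ⟨x, y, h, n1, n2 - m1 + m2, hn1, hk', ha, hc.trans heq⟩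

end Aux6


section Aux7
variable {G : DGraph}

theorem rep_compare (e : G.Ed) (hu : ∀ f : G.Ed, G.src f = G.src e → f = e) :
    ∀ (n : ℕ) (u : G.V) (r : List G.Ed), G.Chain u (List.replicate n e) → G.Chain u r →
      (List.replicate n e <+: r) ∨ (r <+: List.replicate n e) := by
  intro n
  induction n with
  | zero => intro u r _ _; left; exact List.nil_prefix
  | succ n ih =>
    intro u r hc hr
    rw [List.replicate_succ] at hc
    cases r with
    | nil => right; exact List.nil_prefix
    | cons f r' =>
      have hf : f = e := hu f (hr.1.trans hc.1.symm)
      subst hf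
      rcases ih (G.rng f) r' hc.2 hr.2 with hpre | hpre
      · left; rw [List.replicate_succ]; exact List.cons_prefix_cons.mpr ⟨rfl, hpre⟩
      · right; rw [List.replicate_succ]; exact List.cons_prefix_cons.mpr ⟨rfl, hpre⟩

theorem gmul_eq_of_le {X Y P Q : GPath G} {h1 : X.ran = Y.ran} {h2 : P.ran = Q.ran}
    (hYP : Y.IsPrefixOf P) {X' : GPath G} (hX' : X'.start = X.start)
    (hX'e : X'.edges = X.edges ++ P.edges.drop Y.edges.length) (h3 : X'.ran = Q.ran) :
    GIS.mk X Y h1 * GIS.mk P Q h2 = GIS.mk X' Q h3 := by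
  rw [GIS.mk_mul_mk_of_le h1 h2 hYP (by erw [GPath.append_ran, GPath.remainder_ran]; exact h2)]
  refine GIS.mk_eq_mk ?_ rfl h3
  exact GPath.ext' hX'.symm hX'e.symm

theorem gmul_eq_of_ge {X Y P Q : GPath G} {h1 : X.ran = Y.ran} {h2 : P.ran = Q.ran}
    (h1n : ¬ Y.IsPrefixOf P) (hPY : P.IsPrefixOf Y) {Q' : GPath G} (hQ' : Q'.start = Q.start)
    (hQ'e : Q'.edges = Q.edges ++ Y.edges.drop P.edges.length) (h3 : X.ran = Q'.ran) :
    GIS.mk X Y h1 * GIS.mk P Q h2 = GIS.mk X Q' h3 := by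
  rw [GIS.mk_mul_mk_of_ge h1 h2 h1n hPY (by erw [GPath.append_ran, GPath.remainder_ran]; exact h1)]
  refine GIS.mk_eq_mk rfl ?_ h3
  exact GPath.ext' hQ'.symm hQ'e.symm

/-- Unfolded form of `mkExt`. -/
theorem mkExt_eq_mk (x y : GPath G) (h : x.ran = y.ran) (l : List G.Ed)
    (hl : G.Chain x.ran l) :
    mkExt x y h l hl = GIS.mk (x.push l hl) (y.push l (h ▸ hl))
      (by rw [GPath.push_ran, GPath.push_ran, h]) := rfl

end Aux7


section Aux8
variable {G : DGraph}

theorem mk_eq_mkExt {A B : GPath G} {hAB : A.ran = B.ran} {x y : GPath G} {h : x.ran = y.ran}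
    {l : List G.Ed} {hl : G.Chain x.ran l} (hA : A = x.push l hl) (hB : B = y.push l (h ▸ hl)) :
    GIS.mk A B hAB = mkExt x y h l hl := by
  subst hA
  subst hB
  rfl

theorem pcRel_mul_right (e : G.Ed) (hu : ∀ f : G.Ed, G.src f = G.src e → f = e)
    {a b : GIS G} (hab : pcRel e a b) (c : GIS G) : pcRel e (a * c) (b * c) := by
  rcases hab with rfl | ⟨x, y, h, n, m, hn, hm, ha, hb⟩
  · exact pcRel_refl e _
  subst ha hb
  cases c with
  | zero =>
    show pcRel e (mkExt x y h _ hn * (0 : GIS G)) (mkExt x y h _ hm * (0 : GIS G))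
    rw [GIS.mul_zero', GIS.mul_zero']
    exact pcRel_refl e _
  | mk p q hpq =>
    by_cases hyp : y.IsPrefixOf p
    · -- p extends y by t
      obtain ⟨t, ht⟩ := hyp.2
      have htch : G.Chain y.ran t := by
        have hc := p.chain
        rw [← ht, ← hyp.1] at hc
        exact G.chain_append_right hc
      have hpran : p.ran = G.ranAux y.ran t := by
        show G.ranAux p.start p.edges = _
        rw [← ht, ← hyp.1, DGraph.ranAux_append]
        rfl
      have htx : G.Chain x.ran t := by rw [h]; exact htch
      have hQ : (x.push t htx).ran = q.ran := by
        rw [GPath.push_ran, h, ← hpran]; exact hpq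
      have key : ∀ (k : ℕ) (hk : G.Chain x.ran (List.replicate k e)),
          (List.replicate k e <+: t ∧
            mkExt x y h (List.replicate k e) hk * GIS.mk p q hpq = GIS.mk (x.push t htx) q hQ)
          ∨ (t.length ≤ k ∧ t = List.replicate t.length e ∧
              ∃ (hxj : G.Chain x.ran (List.replicate t.length e))
                (hj : (x.push (List.replicate t.length e) hxj).ran = q.ran)
                (hc : G.Chain (x.push (List.replicate t.length e) hxj).ran
                  (List.replicate (k - t.length) e)),
              mkExt x y h (List.replicate k e) hk * GIS.mk p q hpq
                = mkExt (x.push (List.replicate t.length e) hxj) q hj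
                    (List.replicate (k - t.length) e) hc) := by
        intro k hk
        by_cases hkt : List.replicate k e <+: t
        · left
          refine ⟨hkt, ?_⟩
          obtain ⟨t', ht'⟩ := hkt
          unfold mkExt
          refine gmul_eq_of_le (X := x.push (List.replicate k e) hk)
            (Y := y.push (List.replicate k e) (h ▸ hk)) (P := p) (Q := q)
            (X' := x.push t htx) ⟨hyp.1, ?_⟩ rfl ?_ hQ
          · show y.edges ++ List.replicate k e <+: p.edges
            rw [← ht]
            exact (List.prefix_append_right_inj y.edges).mpr ⟨t', ht'⟩
          · show x.edges ++ t = (x.edges ++ List.replicate k e)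
              ++ p.edges.drop (y.edges ++ List.replicate k e).length
            rw [← ht, ← ht', ← List.append_assoc y.edges, List.drop_left, ← List.append_assoc]
        · right
          have h1 : t <+: List.replicate k e := by
            rcases rep_compare e hu k y.ran t (h ▸ hk) htch with h1 | h1
            · exact absurd h1 hkt
            · exact h1
          obtain ⟨teq, hjk⟩ := eq_rep_of_prefix_rep h1
          have hxj : G.Chain x.ran (List.replicate t.length e) := chain_rep_mono hjk hk
          have hXjran : (x.push (List.replicate t.length e) hxj).ran = q.ran := by
            rw [GPath.push_ran, h]
            have e1 : G.ranAux y.ran (List.replicate t.length e) = G.ranAux y.ran t := by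
              conv_rhs => rw [teq]
            rw [e1, ← hpran]
            exact hpq
          have hcc : G.Chain (x.push (List.replicate t.length e) hxj).ran
              (List.replicate (k - t.length) e) := by
            rw [GPath.push_ran]
            exact chain_rep_drop hjk hk
          refine ⟨hjk, teq, hxj, hXjran, hcc, ?_⟩
          have hq' : G.Chain q.ran (List.replicate (k - t.length) e) := hXjran ▸ hcc
          have hrepsplit : List.replicate k e
              = List.replicate t.length e ++ List.replicate (k - t.length) e := by
            rw [← List.replicate_add]
            congr 1
            omega
          have hsplit : y.edges ++ List.replicate k e
              = (y.edges ++ t) ++ List.replicate (k - t.length) e := by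
            rw [List.append_assoc]
            congr 1
            rw [hrepsplit, ← teq]
          have eqn : mkExt x y h (List.replicate k e) hk * GIS.mk p q hpq
              = GIS.mk (x.push (List.replicate k e) hk)
                  (q.push (List.replicate (k - t.length) e) hq')
                  (by
                    rw [GPath.push_ran, GPath.push_ran, ← hXjran, GPath.push_ran,
                      ← DGraph.ranAux_append, ← List.replicate_add]
                    congr 2
                    omega) := by
            unfold mkExt
            refine gmul_eq_of_ge (X := x.push (List.replicate k e) hk)
              (Y := y.push (List.replicate k e) (h ▸ hk)) (P := p) (Q := q)
              (Q' := q.push (List.replicate (k - t.length) e) hq') ?_ ⟨hyp.1.symm, ?_⟩ rfl ?_ _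
            · intro hcon
              have h2 := hcon.2
              rw [← ht] at h2
              exact hkt ((List.prefix_append_right_inj y.edges).mp h2)
            · show p.edges <+: y.edges ++ List.replicate k e
              rw [← ht]
              exact (List.prefix_append_right_inj y.edges).mpr h1
            · show q.edges ++ List.replicate (k - t.length) e
                = q.edges ++ (y.edges ++ List.replicate k e).drop p.edges.length
              rw [hsplit, ← ht, List.drop_left]
          refine eqn.trans (mk_eq_mkExt ?_ rfl)
          refine GPath.ext' rfl ?_
          show x.edges ++ List.replicate k e
            = (x.edges ++ List.replicate t.length e) ++ List.replicate (k - t.length) e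
          rw [List.append_assoc, ← hrepsplit]
      rcases key n hn with ⟨hc1, e1⟩ | ⟨hjn, teq, hxj, hj, hcn, e1⟩ <;>
        rcases key m hm with ⟨hc2, e2⟩ | ⟨hjm, teq2, hxj2, hj2, hcm, e2⟩
      · rw [e1, e2]; exact pcRel_refl e _
      · -- a*c in t-form, b*c in j-form
        refine Or.inr ⟨x.push (List.replicate t.length e) hxj2, q, hj2, 0, m - t.length,
          trivial, hcm, ?_, e2⟩
        rw [e1]
        refine mk_eq_mkExt (GPath.ext' rfl ?_) (GPath.ext' rfl ?_)
        · show x.edges ++ t = (x.edges ++ List.replicate t.length e) ++ List.replicate 0 e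
          rw [← teq2]
          simp
        · simp
      · refine Or.inr ⟨x.push (List.replicate t.length e) hxj, q, hj, n - t.length, 0,
          hcn, trivial, e1, ?_⟩
        rw [e2]
        refine mk_eq_mkExt (GPath.ext' rfl ?_) (GPath.ext' rfl ?_)
        · show x.edges ++ t = (x.edges ++ List.replicate t.length e) ++ List.replicate 0 e
          rw [← teq]
          simp
        · simp
      · exact Or.inr ⟨x.push (List.replicate t.length e) hxj, q, hj, n - t.length,
          m - t.length, hcn, hcm, e1, e2⟩
    · by_cases hpy : p.IsPrefixOf y
      · -- y extends p by s
        obtain ⟨s, hs⟩ := hpy.2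
        have hsq : G.Chain q.ran s := by
          have hc := y.chain
          rw [← hs, ← hpy.1] at hc
          have h2 := G.chain_append_right hc
          have h3 : G.ranAux p.start p.edges = q.ran := hpq
          rw [h3] at h2
          exact h2
        have hyran : y.ran = G.ranAux q.ran s := by
          show G.ranAux y.start y.edges = _
          rw [← hs, ← hpy.1, DGraph.ranAux_append]
          have h3 : G.ranAux p.start p.edges = q.ran := hpq
          rw [h3]
        have h2 : x.ran = (q.push s hsq).ran := by
          rw [GPath.push_ran, h]
          exact hyran
        have key : ∀ (k : ℕ) (hk : G.Chain x.ran (List.replicate k e)),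
            mkExt x y h (List.replicate k e) hk * GIS.mk p q hpq
              = mkExt x (q.push s hsq) h2 (List.replicate k e) hk := by
          intro k hk
          unfold mkExt
          refine gmul_eq_of_ge (X := x.push (List.replicate k e) hk)
            (Y := y.push (List.replicate k e) (h ▸ hk)) (P := p) (Q := q)
            (Q' := (q.push s hsq).push (List.replicate k e) (h2 ▸ hk)) ?_ ⟨hpy.1, ?_⟩ rfl ?_ _
          · intro hcon
            refine hyp ⟨hcon.1, ?_⟩
            exact List.IsPrefix.trans (List.prefix_append y.edges _) hcon.2
          · show p.edges <+: y.edges ++ List.replicate k e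
            exact List.IsPrefix.trans hpy.2 (List.prefix_append y.edges _)
          · show (q.edges ++ s) ++ List.replicate k e
              = q.edges ++ (y.edges ++ List.replicate k e).drop p.edges.length
            rw [← hs, List.append_assoc p.edges, List.drop_left, List.append_assoc]
        rw [key n hn, key m hm]
        exact Or.inr ⟨x, q.push s hsq, h2, n, m, hn, hm, rfl, rfl⟩
      · -- incomparable
        have key : ∀ (k : ℕ) (hk : G.Chain x.ran (List.replicate k e)),
            mkExt x y h (List.replicate k e) hk * GIS.mk p q hpq = 0 := by
          intro k hk
          unfold mkExt
          refine GIS.mk_mul_mk_of_incomp _ _ ?_ ?_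
          · intro hcon
            refine hyp ⟨hcon.1, ?_⟩
            exact List.IsPrefix.trans (List.prefix_append y.edges _) hcon.2
          · intro hcon
            rcases List.prefix_or_prefix_of_prefix hcon.2 (List.prefix_append y.edges _)
              with h1 | h1
            · exact hpy ⟨hcon.1, h1⟩
            · exact hyp ⟨hcon.1.symm, h1⟩
        rw [key n hn, key m hm]
        exact pcRel_refl e _
end Aux8


section Aux9
variable {G : DGraph}

theorem pcRel_mul_left (e : G.Ed) (hu : ∀ f : G.Ed, G.src f = G.src e → f = e)
    {a b : GIS G} (hab : pcRel e a b) (c : GIS G) : pcRel e (c * a) (c * b) := by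
  rcases hab with rfl | ⟨x, y, h, n, m, hn, hm, ha, hb⟩
  · exact pcRel_refl e _
  subst ha hb
  cases c with
  | zero =>
    show pcRel e ((0 : GIS G) * mkExt x y h _ hn) ((0 : GIS G) * mkExt x y h _ hm)
    rw [GIS.zero_mul', GIS.zero_mul']
    exact pcRel_refl e _
  | mk p q hpq =>
    by_cases hqx : q.IsPrefixOf x
    · -- x extends q by s
      obtain ⟨s, hs⟩ := hqx.2
      have hsp : G.Chain p.ran s := by
        have hc := x.chain
        rw [← hs, ← hqx.1] at hc
        have h2 := G.chain_append_right hc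
        have h3 : G.ranAux q.start q.edges = p.ran := hpq.symm
        rw [h3] at h2
        exact h2
      have hxran : x.ran = G.ranAux p.ran s := by
        show G.ranAux x.start x.edges = _
        rw [← hs, ← hqx.1, DGraph.ranAux_append]
        have h3 : G.ranAux q.start q.edges = p.ran := hpq.symm
        rw [h3]
      have h3 : (p.push s hsp).ran = y.ran := by
        rw [GPath.push_ran, ← hxran]
        exact h
      have key : ∀ (k : ℕ) (hk : G.Chain x.ran (List.replicate k e)),
          GIS.mk p q hpq * mkExt x y h (List.replicate k e) hk
            = mkExt (p.push s hsp) y h3 (List.replicate k e)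
                (by rw [GPath.push_ran, ← hxran]; exact hk) := by
        intro k hk
        unfold mkExt
        refine gmul_eq_of_le (X := p) (Y := q) (P := x.push (List.replicate k e) hk)
          (Q := y.push (List.replicate k e) (h ▸ hk))
          (X' := (p.push s hsp).push (List.replicate k e)
            (by rw [GPath.push_ran, ← hxran]; exact hk))
          ⟨hqx.1, ?_⟩ rfl ?_ _
        · show q.edges <+: x.edges ++ List.replicate k e
          exact List.IsPrefix.trans hqx.2 (List.prefix_append x.edges _)
        · show (p.edges ++ s) ++ List.replicate k e
            = p.edges ++ (x.edges ++ List.replicate k e).drop q.edges.length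
          rw [← hs, List.append_assoc q.edges, List.drop_left, List.append_assoc]
      rw [key n hn, key m hm]
      exact Or.inr ⟨p.push s hsp, y, h3, n, m, _, _, rfl, rfl⟩
    · by_cases hxq : x.IsPrefixOf q
      · -- q extends x by r
        obtain ⟨r, hr⟩ := hxq.2
        have hrch : G.Chain x.ran r := by
          have hc := q.chain
          rw [← hr, ← hxq.1] at hc
          exact G.chain_append_right hc
        have hqran : q.ran = G.ranAux x.ran r := by
          show G.ranAux q.start q.edges = _
          rw [← hr, ← hxq.1, DGraph.ranAux_append]
          rfl
        have hyr : G.Chain y.ran r := h ▸ hrch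
        have hyr_ran : (y.push r hyr).ran = q.ran := by
          rw [GPath.push_ran, ← h, ← hqran]
        have pf_stable : p.ran = (y.push r hyr).ran := hpq.trans hyr_ran.symm
        have key : ∀ (k : ℕ) (hk : G.Chain x.ran (List.replicate k e)),
            (List.replicate k e <+: r ∧
              GIS.mk p q hpq * mkExt x y h (List.replicate k e) hk
                = GIS.mk p (y.push r hyr) pf_stable)
            ∨ (r.length ≤ k ∧ r = List.replicate r.length e ∧
                ∃ (hyj : G.Chain y.ran (List.replicate r.length e))
                  (pf : p.ran = (y.push (List.replicate r.length e) hyj).ran)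
                  (hc : G.Chain p.ran (List.replicate (k - r.length) e)),
                GIS.mk p q hpq * mkExt x y h (List.replicate k e) hk
                  = mkExt p (y.push (List.replicate r.length e) hyj) pf
                      (List.replicate (k - r.length) e) hc) := by
          intro k hk
          by_cases hrk : r <+: List.replicate k e
          · right
            obtain ⟨teq, hjk⟩ := eq_rep_of_prefix_rep hrk
            have hyj : G.Chain y.ran (List.replicate r.length e) :=
              chain_rep_mono hjk (h ▸ hk)
            have hyjr : G.ranAux y.ran (List.replicate r.length e) = G.ranAux y.ran r := by
              conv_rhs => rw [teq]
            have pf : p.ran = (y.push (List.replicate r.length e) hyj).ran := by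
              rw [GPath.push_ran, hyjr, ← h, ← hqran]
              exact hpq
            have hc : G.Chain p.ran (List.replicate (k - r.length) e) := by
              have hd := chain_rep_drop hjk hk
              have hp2 : p.ran = G.ranAux x.ran (List.replicate r.length e) := by
                rw [hpq, hqran]
                conv_lhs => rw [teq]
              rw [← hp2] at hd
              exact hd
            refine ⟨hjk, teq, hyj, pf, hc, ?_⟩
            have hrepsplit : List.replicate k e
                = List.replicate r.length e ++ List.replicate (k - r.length) e := by
              rw [← List.replicate_add]
              congr 1
              omega
            have hsplitX : x.edges ++ List.replicate k e
                = (x.edges ++ r) ++ List.replicate (k - r.length) e := by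
              rw [List.append_assoc]
              congr 1
              rw [hrepsplit, ← teq]
            have eqn : GIS.mk p q hpq * mkExt x y h (List.replicate k e) hk
                = GIS.mk (p.push (List.replicate (k - r.length) e) hc)
                    (y.push (List.replicate k e) (h ▸ hk))
                    (by
                      rw [GPath.push_ran, GPath.push_ran, hpq, hqran, ← DGraph.ranAux_append, h]
                      congr 1
                      rw [hrepsplit, ← teq]) := by
              unfold mkExt
              refine gmul_eq_of_le (X := p) (Y := q) (P := x.push (List.replicate k e) hk)
                (Q := y.push (List.replicate k e) (h ▸ hk))
                (X' := p.push (List.replicate (k - r.length) e) hc) ⟨hxq.1.symm, ?_⟩ rfl ?_ _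
              · show q.edges <+: x.edges ++ List.replicate k e
                rw [← hr]
                exact (List.prefix_append_right_inj x.edges).mpr hrk
              · show p.edges ++ List.replicate (k - r.length) e
                  = p.edges ++ (x.edges ++ List.replicate k e).drop q.edges.length
                rw [hsplitX, ← hr, List.drop_left]
            refine eqn.trans (mk_eq_mkExt (GPath.ext' rfl rfl) (GPath.ext' rfl ?_))
            show y.edges ++ List.replicate k e
              = (y.edges ++ List.replicate r.length e) ++ List.replicate (k - r.length) e
            rw [List.append_assoc, ← hrepsplit]
          · left
            have hkr : List.replicate k e <+: r := by
              rcases rep_compare e hu k x.ran r hk hrch with h1 | h1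
              · exact h1
              · exact absurd h1 hrk
            refine ⟨hkr, ?_⟩
            obtain ⟨r₂, hr2⟩ := id hkr
            unfold mkExt
            refine gmul_eq_of_ge (X := p) (Y := q) (P := x.push (List.replicate k e) hk)
              (Q := y.push (List.replicate k e) (h ▸ hk)) (Q' := y.push r hyr) ?_
              ⟨hxq.1, ?_⟩ rfl ?_ _
            · intro hcon
              have h2 := hcon.2
              rw [← hr] at h2
              exact hrk ((List.prefix_append_right_inj x.edges).mp h2)
            · show x.edges ++ List.replicate k e <+: q.edges
              rw [← hr]
              exact (List.prefix_append_right_inj x.edges).mpr hkr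
            · show y.edges ++ r
                = (y.edges ++ List.replicate k e) ++ q.edges.drop (x.edges
                    ++ List.replicate k e).length
              rw [← hr, ← hr2, ← List.append_assoc x.edges, List.drop_left,
                ← List.append_assoc]
        rcases key n hn with ⟨hc1, e1⟩ | ⟨hjn, teq, hyj, pf, hcn, e1⟩ <;>
          rcases key m hm with ⟨hc2, e2⟩ | ⟨hjm, teq2, hyj2, pf2, hcm, e2⟩
        · rw [e1, e2]; exact pcRel_refl e _
        · refine Or.inr ⟨p, y.push (List.replicate r.length e) hyj2, pf2, 0, m - r.length,
            trivial, hcm, ?_, e2⟩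
          rw [e1]
          refine mk_eq_mkExt (GPath.ext' rfl ?_) (GPath.ext' rfl ?_)
          · simp
          · show y.edges ++ r
              = (y.edges ++ List.replicate r.length e) ++ List.replicate 0 e
            rw [← teq2]
            simp
        · refine Or.inr ⟨p, y.push (List.replicate r.length e) hyj, pf, n - r.length, 0,
            hcn, trivial, e1, ?_⟩
          rw [e2]
          refine mk_eq_mkExt (GPath.ext' rfl ?_) (GPath.ext' rfl ?_)
          · simp
          · show y.edges ++ r
              = (y.edges ++ List.replicate r.length e) ++ List.replicate 0 e
            rw [← teq]
            simp
        · exact Or.inr ⟨p, y.push (List.replicate r.length e) hyj, pf, n - r.length,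
            m - r.length, hcn, hcm, e1, e2⟩
      · -- incomparable
        have key : ∀ (k : ℕ) (hk : G.Chain x.ran (List.replicate k e)),
            GIS.mk p q hpq * mkExt x y h (List.replicate k e) hk = 0 := by
          intro k hk
          unfold mkExt
          refine GIS.mk_mul_mk_of_incomp _ _ ?_ ?_
          · intro hcon
            rcases List.prefix_or_prefix_of_prefix hcon.2 (List.prefix_append x.edges _)
              with h1 | h1
            · exact hqx ⟨hcon.1, h1⟩
            · exact hxq ⟨hcon.1.symm, h1⟩
          · intro hcon
            refine hxq ⟨hcon.1, ?_⟩
            exact List.IsPrefix.trans (List.prefix_append x.edges _) hcon.2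
        rw [key n hn, key m hm]
        exact pcRel_refl e _

end Aux9


section Aux10
variable {G : DGraph}

/-- The congruence collapsing `v` with `e e⁻¹` when `e` is the unique edge out of `v`. -/
def pcCon (e : G.Ed) (hu : ∀ f : G.Ed, G.src f = G.src e → f = e) : Con (GIS G) where
  r := pcRel e
  iseqv := ⟨pcRel_refl e, pcRel_symm, pcRel_trans⟩
  mul' := fun {w x y z} h1 h2 =>
    pcRel_trans (pcRel_mul_right e hu h1 y) (pcRel_mul_left e hu h2 x)

theorem deg_of_congFree (hCF : CongFree G)
    (hcard : ∃ a b c : GIS G, a ≠ b ∧ a ≠ c ∧ b ≠ c) :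
    ∀ v : G.V, ∃ e f : G.Ed, e ≠ f ∧ G.src e = v ∧ G.src f = v := by
  have hconn := conn_of_congFree hCF
  intro v
  by_contra hnot
  by_cases hv : ∃ e : G.Ed, G.src e = v
  · obtain ⟨e, he⟩ := hv
    have hu : ∀ f : G.Ed, G.src f = G.src e → f = e := by
      intro f hf
      by_contra hne
      exact hnot ⟨f, e, hne, hf.trans he, he⟩
    rcases hCF (pcCon e hu) with huniv | hdiag
    · rcases huniv 0 (vertexEl G (G.src e)) with heq |
        ⟨x', y', h', n', m', hn', hm', h0a, h0b⟩
      · exact GIS.mk_ne_zero _ _ _ heq.symm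
      · exact GIS.mk_ne_zero _ _ _ h0a.symm
    · have hch1 : G.Chain (GPath.ofVertex G (G.src e)).ran (List.replicate 1 e) :=
        ⟨rfl, trivial⟩
      have hrel : pcRel e (vertexEl G (G.src e))
          (GIS.mk (GPath.ofEdge G e) (GPath.ofEdge G e) rfl) := by
        refine Or.inr ⟨GPath.ofVertex G (G.src e), GPath.ofVertex G (G.src e), rfl, 0, 1,
          trivial, hch1, ?_, ?_⟩
        · exact mk_eq_mkExt (GPath.ext' rfl (by simp [GPath.ofVertex]))
            (GPath.ext' rfl (by simp [GPath.ofVertex]))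
        · exact mk_eq_mkExt (GPath.ext' rfl (by simp [GPath.ofVertex, GPath.ofEdge]))
            (GPath.ext' rfl (by simp [GPath.ofVertex, GPath.ofEdge]))
      have heq := (hdiag _ _).mp hrel
      have hinj := GIS.mk_inj heq
      have := congrArg GPath.edges hinj.1
      simp [GPath.ofVertex, GPath.ofEdge] at this
  · have hvw : ∀ w : G.V, w = v := by
      intro w
      obtain ⟨t, hts, htr⟩ := hconn v w
      cases hte : t.edges with
      | nil =>
        rw [← htr]
        show G.ranAux t.start t.edges = v
        rw [hte, hts]
        rfl
      | cons f fs =>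
        have hc := t.chain
        rw [hte] at hc
        exact absurd ⟨f, hc.1.trans hts⟩ hv
    have hpath : ∀ p2 : GPath G, p2 = GPath.ofVertex G v := by
      intro p2
      cases hpe : p2.edges with
      | nil => exact GPath.ext' (hvw p2.start) (by rw [hpe]; rfl)
      | cons f fs =>
        have hc := p2.chain
        rw [hpe] at hc
        exact absurd ⟨f, hc.1.trans (hvw p2.start)⟩ hv
    have htwo : ∀ a : GIS G, a = 0 ∨ a = vertexEl G v := by
      intro a
      cases a with
      | zero => exact Or.inl rfl
      | mk x' y' h' => exact Or.inr (GIS.mk_eq_mk (hpath x') (hpath y') rfl)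
    obtain ⟨a, b, c2, hab, hac, hbc⟩ := hcard
    rcases htwo a with ha | ha <;> rcases htwo b with hb | hb <;>
      rcases htwo c2 with hc | hc <;> simp_all

end Aux10

/-- If `|G(E)| > 2`, then `G(E)` is congruence-free iff `E` has exactly
one strongly connected component (i.e. `E` has a vertex and all vertices are mutually
reachable) and every vertex of `E` has out-degree at least `2`. -/
theorem stmt15 (G : DGraph) (hcard : ∃ a b c : GIS G, a ≠ b ∧ a ≠ c ∧ b ≠ c) :
    CongFree G ↔
      ((Nonempty G.V ∧ ∀ v w : G.V, GConnected G v w) ∧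
        ∀ v : G.V, ∃ e f : G.Ed, e ≠ f ∧ G.src e = v ∧ G.src f = v) := by
  constructor
  · intro hCF
    refine ⟨⟨?_, conn_of_congFree hCF⟩, deg_of_congFree hCF hcard⟩
    obtain ⟨a, b, c, hab, hac, hbc⟩ := hcard
    cases a with
    | zero =>
      cases b with
      | zero => exact absurd rfl hab
      | mk x y h => exact ⟨x.start⟩
    | mk x y h => exact ⟨x.start⟩
  · rintro ⟨⟨hne, hconn⟩, hdeg⟩
    exact backward_dir hconn hdeg
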